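/- arXiv:1703.00636 — 2 statements merged into one kernel-verified Lean document; each statement's English description precedes it below -/
import Mathlib

section
/- Injectivity of the multiplication map in degree 10: if p is a weighted homogeneous polynomial of weighted degree 10 such that both x₁·p ∈ J and x₂·p ∈ J, then p ∈ J. -/
open MvPolynomial

noncomputable section

/-- The polynomial ring `ℂ[x₁,x₂,x₃,x₄]`. -/
abbrev S : Type := MvPolynomial (Fin 4) ℂ

/-- The weights `(1,1,2,5)`. -/
def w : Fin 4 → ℕ := ![1, 1, 2, 5]

/-- The Fermat-type polynomial `f₀ = x₁¹⁰ + x₂¹⁰ + x₃⁵ + x₄²`. -/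
def f₀ : S := X 0 ^ 10 + X 1 ^ 10 + X 2 ^ 5 + X 3 ^ 2

/-- The Jacobian ideal of `f₀`, generated by its four partial derivatives. -/
def J : Ideal S :=
  Ideal.span {pderiv 0 f₀, pderiv 1 f₀, pderiv 2 f₀, pderiv 3 f₀}

/-- The Jacobian ring `R = S ⧸ J`. -/
abbrev R : Type := S ⧸ J

/-- The quotient map `mk : S → R` as a `ℂ`-linear map. -/
def mkL : S →ₗ[ℂ] R := (Ideal.Quotient.mkₐ ℂ J).toLinearMap

/-- `S_k`, the space of weighted homogeneous polynomials of weighted degree `k`. -/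
def Sk (k : ℕ) : Submodule ℂ S := weightedHomogeneousSubmodule ℂ w k

/-- `R_k = mk(S_k)`, the image of `S_k` in the Jacobian ring. -/
def Rk (k : ℕ) : Submodule ℂ R := (Sk k).map mkL


/-- The exponent set of the monomial generators `x₁⁹, x₂⁹, x₃⁴, x₄`. -/
def G : Set (Fin 4 →₀ ℕ) :=
  {Finsupp.single 0 9, Finsupp.single 1 9, Finsupp.single 2 4, Finsupp.single 3 1}

/-- `J` is the monomial ideal generated by `x₁⁹, x₂⁹, x₃⁴, x₄`. -/
lemma J_eq_monomial_span : J = Ideal.span ((fun s => monomial s (1 : ℂ)) '' G) := by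
  have e0 : pderiv 0 f₀ = C 10 * X 0 ^ 9 := by simp [f₀]; exact (map_ofNat C 10).symm
  have e1 : pderiv 1 f₀ = C 10 * X 1 ^ 9 := by simp [f₀]; exact (map_ofNat C 10).symm
  have e2 : pderiv 2 f₀ = C 5 * X 2 ^ 4 := by simp [f₀]; exact (map_ofNat C 5).symm
  have e3 : pderiv 3 f₀ = C 2 * X 3 := by simp [f₀]; exact (map_ofNat C 2).symm
  have m0 : (monomial (Finsupp.single (0:Fin 4) 9) (1:ℂ)) ∈
      (fun s => monomial s (1 : ℂ)) '' G := ⟨_, Or.inl rfl, rfl⟩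
  have m1 : (monomial (Finsupp.single (1:Fin 4) 9) (1:ℂ)) ∈
      (fun s => monomial s (1 : ℂ)) '' G := ⟨_, Or.inr (Or.inl rfl), rfl⟩
  have m2 : (monomial (Finsupp.single (2:Fin 4) 4) (1:ℂ)) ∈
      (fun s => monomial s (1 : ℂ)) '' G := ⟨_, Or.inr (Or.inr (Or.inl rfl)), rfl⟩
  have m3 : (monomial (Finsupp.single (3:Fin 4) 1) (1:ℂ)) ∈
      (fun s => monomial s (1 : ℂ)) '' G := ⟨_, Or.inr (Or.inr (Or.inr rfl)), rfl⟩
  apply le_antisymm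
  · rw [J, Ideal.span_le]
    rintro x (rfl | rfl | rfl | rfl)
    · rw [e0]
      exact Ideal.mul_mem_left _ _ (Ideal.subset_span (by rw [X_pow_eq_monomial]; exact m0))
    · rw [e1]
      exact Ideal.mul_mem_left _ _ (Ideal.subset_span (by rw [X_pow_eq_monomial]; exact m1))
    · rw [e2]
      exact Ideal.mul_mem_left _ _ (Ideal.subset_span (by rw [X_pow_eq_monomial]; exact m2))
    · rw [e3]
      exact Ideal.mul_mem_left _ _ (Ideal.subset_span
        (by rw [← pow_one (X 3), X_pow_eq_monomial]; exact m3))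
  · rw [Ideal.span_le]
    rintro x ⟨s, hs, rfl⟩
    rcases hs with rfl | rfl | rfl | rfl
    · have : (monomial (Finsupp.single (0:Fin 4) 9) (1:ℂ)) = C (10⁻¹) * pderiv 0 f₀ := by
        rw [e0, ← X_pow_eq_monomial, ← mul_assoc, ← C_mul]; norm_num
      beta_reduce
      rw [this]
      exact Ideal.mul_mem_left _ _ (Ideal.subset_span (Or.inl rfl))
    · have : (monomial (Finsupp.single (1:Fin 4) 9) (1:ℂ)) = C (10⁻¹) * pderiv 1 f₀ := by
        rw [e1, ← X_pow_eq_monomial, ← mul_assoc, ← C_mul]; norm_num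
      beta_reduce
      rw [this]
      exact Ideal.mul_mem_left _ _ (Ideal.subset_span (Or.inr (Or.inl rfl)))
    · have : (monomial (Finsupp.single (2:Fin 4) 4) (1:ℂ)) = C (5⁻¹) * pderiv 2 f₀ := by
        rw [e2, ← X_pow_eq_monomial, ← mul_assoc, ← C_mul]; norm_num
      beta_reduce
      rw [this]
      exact Ideal.mul_mem_left _ _ (Ideal.subset_span (Or.inr (Or.inr (Or.inl rfl))))
    · have : (monomial (Finsupp.single (3:Fin 4) 1) (1:ℂ)) = C (2⁻¹) * pderiv 3 f₀ := by
        rw [e3, ← mul_assoc, ← C_mul]; norm_num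
        rw [← X_pow_eq_monomial, pow_one]
      beta_reduce
      rw [this]
      exact Ideal.mul_mem_left _ _ (Ideal.subset_span (Or.inr (Or.inr (Or.inr rfl))))

/-- Injectivity of the multiplication map in degree 10: if `p` is weighted homogeneous of
weighted degree 10 and `x₁·p ∈ J` and `x₂·p ∈ J`, then `p ∈ J`. -/
theorem multiplication_injective :
    ∀ p : S, IsWeightedHomogeneous w p 10 →
      X 0 * p ∈ J → X 1 * p ∈ J → p ∈ J := by
  intro p hp h0 h1
  rw [J_eq_monomial_span] at h0 h1 ⊢
  rw [mem_ideal_span_monomial_image] at h0 h1 ⊢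
  intro m hm
  have hcm : coeff m p ≠ 0 := mem_support_iff.mp hm
  have hw : Finsupp.weight w m = 10 := hp hcm
  have hwval : m 0 + m 1 + m 2 * 2 + m 3 * 5 = 10 := by
    rw [Finsupp.weight_apply, Finsupp.sum_fintype _ _ (fun i => zero_smul ℕ (w i)),
      Fin.sum_univ_four] at hw
    simpa [w] using hw
  have h0' := h0 (Finsupp.single 0 1 + m) (by
    rw [mem_support_iff, coeff_X_mul]; exact hcm)
  have h1' := h1 (Finsupp.single 1 1 + m) (by
    rw [mem_support_iff, coeff_X_mul]; exact hcm)
  have c0 : (∃ si ∈ G, si ≤ m) ∨ 8 ≤ m 0 := by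
    obtain ⟨si, hsi, hle⟩ := h0'
    rcases hsi with rfl | rfl | rfl | rfl
    · right
      have := Finsupp.single_le_iff.mp hle
      simp at this; omega
    · left; exact ⟨_, Or.inr (Or.inl rfl),
        Finsupp.single_le_iff.mpr (by simpa using Finsupp.single_le_iff.mp hle)⟩
    · left; exact ⟨_, Or.inr (Or.inr (Or.inl rfl)),
        Finsupp.single_le_iff.mpr (by simpa using Finsupp.single_le_iff.mp hle)⟩
    · left; exact ⟨_, Or.inr (Or.inr (Or.inr rfl)),
        Finsupp.single_le_iff.mpr (by simpa using Finsupp.single_le_iff.mp hle)⟩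
  have c1 : (∃ si ∈ G, si ≤ m) ∨ 8 ≤ m 1 := by
    obtain ⟨si, hsi, hle⟩ := h1'
    rcases hsi with rfl | rfl | rfl | rfl
    · left; exact ⟨_, Or.inl rfl,
        Finsupp.single_le_iff.mpr (by simpa using Finsupp.single_le_iff.mp hle)⟩
    · right
      have := Finsupp.single_le_iff.mp hle
      simp at this; omega
    · left; exact ⟨_, Or.inr (Or.inr (Or.inl rfl)),
        Finsupp.single_le_iff.mpr (by simpa using Finsupp.single_le_iff.mp hle)⟩
    · left; exact ⟨_, Or.inr (Or.inr (Or.inr rfl)),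
        Finsupp.single_le_iff.mpr (by simpa using Finsupp.single_le_iff.mp hle)⟩
  rcases c0 with h | h8
  · exact h
  rcases c1 with h | h8'
  · exact h
  omega
end
end

section
/- The differential of the period map of degree-10 hypersurfaces in P(1,1,2,5) at the Fermat point has the maximum rank 28: the ℂ-linear map Φ : S₁₀ → (S₁ →ₗ R₁₁) defined by Φ(p)(ℓ) = mk(p·ℓ) has kernel exactly J ∩ S₁₀, and its range has finrank 28. -/
open MvPolynomial

noncomputable section

/-- The differential of the period map at the Fermat point:
`Φ : S₁₀ → (S₁ →ₗ R)`, `Φ(p)(ℓ) = mk(p·ℓ)`. -/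
def Φ : (Sk 10) →ₗ[ℂ] (Sk 1) →ₗ[ℂ] R :=
  (LinearMap.mul ℂ R).compl₁₂ (mkL ∘ₗ (Sk 10).subtype) (mkL ∘ₗ (Sk 1).subtype)

def e0 : Fin 4 →₀ ℕ := Finsupp.single 0 9
def e1 : Fin 4 →₀ ℕ := Finsupp.single 1 9
def e2 : Fin 4 →₀ ℕ := Finsupp.single 2 4
def e3 : Fin 4 →₀ ℕ := Finsupp.single 3 1

lemma pd0 : pderiv 0 f₀ = C (10:ℂ) * monomial e0 1 := by
  simp [f₀, pderiv_pow, e0, X_pow_eq_monomial, C_mul_monomial, ← Finsupp.single_tsub]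
lemma pd1 : pderiv 1 f₀ = C (10:ℂ) * monomial e1 1 := by
  simp [f₀, pderiv_pow, e1, X_pow_eq_monomial, C_mul_monomial, ← Finsupp.single_tsub]
lemma pd2 : pderiv 2 f₀ = C (5:ℂ) * monomial e2 1 := by
  simp [f₀, pderiv_pow, e2, X_pow_eq_monomial, C_mul_monomial, ← Finsupp.single_tsub]
lemma pd3 : pderiv 3 f₀ = C (2:ℂ) * monomial e3 1 := by
  simp [f₀, pderiv_pow, e3, X_pow_eq_monomial, C_mul_monomial, ← Finsupp.single_tsub]

lemma J_eq : J = Ideal.span ((fun s => monomial s (1:ℂ)) '' {e0, e1, e2, e3}) := by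
  apply le_antisymm <;> rw [J, Ideal.span_le]
  · rintro x hx
    simp only [Set.mem_insert_iff, Set.mem_singleton_iff] at hx
    rcases hx with rfl | rfl | rfl | rfl
    · rw [pd0]; exact Ideal.mul_mem_left _ _ (Ideal.subset_span ⟨e0, by simp, rfl⟩)
    · rw [pd1]; exact Ideal.mul_mem_left _ _ (Ideal.subset_span ⟨e1, by simp, rfl⟩)
    · rw [pd2]; exact Ideal.mul_mem_left _ _ (Ideal.subset_span ⟨e2, by simp, rfl⟩)
    · rw [pd3]; exact Ideal.mul_mem_left _ _ (Ideal.subset_span ⟨e3, by simp, rfl⟩)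
  · rintro x ⟨s, hs, rfl⟩
    simp only [Set.mem_insert_iff, Set.mem_singleton_iff] at hs
    rcases hs with rfl | rfl | rfl | rfl
    · have h : (monomial e0 (1:ℂ)) = C (10:ℂ)⁻¹ * pderiv 0 f₀ := by
        rw [pd0, ← mul_assoc, ← C_mul]; norm_num
      show (monomial _ 1 : S) ∈ _
      rw [h]; exact Ideal.mul_mem_left _ _ (Ideal.subset_span (by simp))
    · have h : (monomial e1 (1:ℂ)) = C (10:ℂ)⁻¹ * pderiv 1 f₀ := by
        rw [pd1, ← mul_assoc, ← C_mul]; norm_num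
      show (monomial _ 1 : S) ∈ _
      rw [h]; exact Ideal.mul_mem_left _ _ (Ideal.subset_span (by simp))
    · have h : (monomial e2 (1:ℂ)) = C (5:ℂ)⁻¹ * pderiv 2 f₀ := by
        rw [pd2, ← mul_assoc, ← C_mul]; norm_num
      show (monomial _ 1 : S) ∈ _
      rw [h]; exact Ideal.mul_mem_left _ _ (Ideal.subset_span (by simp))
    · have h : (monomial e3 (1:ℂ)) = C (2:ℂ)⁻¹ * pderiv 3 f₀ := by
        rw [pd3, ← mul_assoc, ← C_mul]; norm_num
      show (monomial _ 1 : S) ∈ _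
      rw [h]; exact Ideal.mul_mem_left _ _ (Ideal.subset_span (by simp))

lemma mem_J_iff (p : S) : p ∈ J ↔ ∀ m ∈ p.support, e0 ≤ m ∨ e1 ≤ m ∨ e2 ≤ m ∨ e3 ≤ m := by
  rw [J_eq, mem_ideal_span_monomial_image]
  simp only [Set.mem_insert_iff, Set.mem_singleton_iff, exists_eq_or_imp, exists_eq_left]

lemma weight4 (m : Fin 4 →₀ ℕ) : (Finsupp.weight w) m = m 0 + m 1 + 2 * m 2 + 5 * m 3 := by
  rw [Finsupp.weight_apply, Finsupp.sum_fintype _ _ (by intro i; simp)]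
  simp [Fin.sum_univ_four, w]; ring

lemma Phi_apply (p : Sk 10) (ℓ : Sk 1) :
    Φ p ℓ = Ideal.Quotient.mk J ((p : S) * (ℓ : S)) := by
  simp [Φ, mkL, ← map_mul]

lemma single_le4 (i : Fin 4) (n : ℕ) (m : Fin 4 →₀ ℕ) :
    Finsupp.single i n ≤ m ↔ n ≤ m i := Finsupp.single_le_iff

def ℓ0 : Sk 1 := ⟨X 0, by
  have := isWeightedHomogeneous_X ℂ w (0 : Fin 4)
  simpa [w, Sk, mem_weightedHomogeneousSubmodule] using this⟩
def ℓ1 : Sk 1 := ⟨X 1, by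
  have := isWeightedHomogeneous_X ℂ w (1 : Fin 4)
  simpa [w, Sk, mem_weightedHomogeneousSubmodule] using this⟩

lemma ker_iff (p : Sk 10) : Φ p = 0 ↔ (p : S) ∈ J := by
  constructor
  · intro h
    have h0 : (p : S) * X 0 ∈ J := by
      have h0' : Φ p ℓ0 = 0 := by rw [h]; rfl
      rw [Phi_apply, Ideal.Quotient.eq_zero_iff_mem] at h0'
      exact h0'
    have h1 : (p : S) * X 1 ∈ J := by
      have h1' : Φ p ℓ1 = 0 := by rw [h]; rfl
      rw [Phi_apply, Ideal.Quotient.eq_zero_iff_mem] at h1'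
      exact h1'
    rw [mem_J_iff]
    intro m hm
    have hdeg : m 0 + m 1 + 2 * m 2 + 5 * m 3 = 10 := by
      rw [← weight4]; exact p.2 (mem_support_iff.mp hm)
    have hc0 : (m + Finsupp.single 0 1) ∈ ((p : S) * X 0).support := by
      rw [mem_support_iff, coeff_mul_X]; exact mem_support_iff.mp hm
    have hc1 : (m + Finsupp.single 1 1) ∈ ((p : S) * X 1).support := by
      rw [mem_support_iff, coeff_mul_X]; exact mem_support_iff.mp hm
    have H0 := (mem_J_iff _).mp h0 _ hc0
    have H1 := (mem_J_iff _).mp h1 _ hc1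
    simp (config := { decide := true }) only [e0, e1, e2, e3, single_le4, Finsupp.add_apply,
      Finsupp.single_apply, if_true, if_false] at H0 H1 ⊢
    omega
  · intro h
    apply LinearMap.ext
    intro ℓ
    rw [Phi_apply, LinearMap.zero_apply, Ideal.Quotient.eq_zero_iff_mem]
    exact J.mul_mem_right _ h

def Q : Finset (ℕ×ℕ×ℕ×ℕ) :=
  (Finset.range 11 ×ˢ Finset.range 11 ×ˢ Finset.range 6 ×ˢ Finset.range 3).filter
    (fun q => q.1 + q.2.1 + 2*q.2.2.1 + 5*q.2.2.2 = 10)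
def Qbad : Finset (ℕ×ℕ×ℕ×ℕ) :=
  Q.filter (fun q => 9 ≤ q.1 ∨ 9 ≤ q.2.1 ∨ 4 ≤ q.2.2.1 ∨ 1 ≤ q.2.2.2)

def toM (q : ℕ×ℕ×ℕ×ℕ) : Fin 4 →₀ ℕ :=
  Finsupp.equivFunOnFinite.symm ![q.1, q.2.1, q.2.2.1, q.2.2.2]

lemma toM_apply (q : ℕ×ℕ×ℕ×ℕ) (i : Fin 4) :
    toM q i = ![q.1, q.2.1, q.2.2.1, q.2.2.2] i := rfl

lemma toM_inj : Function.Injective toM := by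
  intro q q' h
  have h0 := congrArg (fun f => f 0) h
  have h1 := congrArg (fun f => f 1) h
  have h2 := congrArg (fun f => f 2) h
  have h3 := congrArg (fun f => f 3) h
  simp only [toM_apply] at h0 h1 h2 h3
  simp only [Matrix.cons_val_zero, Matrix.cons_val_one, Matrix.head_cons] at h0 h1 h2 h3
  obtain ⟨a,b,c,d⟩ := q; obtain ⟨a',b',c',d'⟩ := q'
  simp_all

lemma self_toM (m : Fin 4 →₀ ℕ) : toM (m 0, m 1, m 2, m 3) = m := by
  ext i
  fin_cases i <;> rfl

def T : Finset (Fin 4 →₀ ℕ) := Q.image toM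
def Tbad : Finset (Fin 4 →₀ ℕ) := Qbad.image toM

lemma weight_toM (q : ℕ×ℕ×ℕ×ℕ) :
    (Finsupp.weight w) (toM q) = q.1 + q.2.1 + 2*q.2.2.1 + 5*q.2.2.2 := by
  rw [weight4]
  simp [toM_apply]

lemma mem_T (m : Fin 4 →₀ ℕ) (hd : (Finsupp.weight w) m = 10) : m ∈ T := by
  rw [weight4] at hd
  refine Finset.mem_image.mpr ⟨(m 0, m 1, m 2, m 3), ?_, self_toM m⟩
  simp only [Q, Finset.mem_filter, Finset.mem_product, Finset.mem_range]
  omega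

lemma mem_Tbad (m : Fin 4 →₀ ℕ) (hd : (Finsupp.weight w) m = 10)
    (hb : e0 ≤ m ∨ e1 ≤ m ∨ e2 ≤ m ∨ e3 ≤ m) : m ∈ Tbad := by
  rw [weight4] at hd
  simp only [e0, e1, e2, e3, single_le4] at hb
  refine Finset.mem_image.mpr ⟨(m 0, m 1, m 2, m 3), ?_, self_toM m⟩
  simp only [Qbad, Q, Finset.mem_filter, Finset.mem_product, Finset.mem_range]
  omega

lemma T_weight (m : Fin 4 →₀ ℕ) (hm : m ∈ T) : (Finsupp.weight w) m = 10 := by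
  obtain ⟨q, hq, rfl⟩ := Finset.mem_image.mp hm
  rw [weight_toM]
  simp only [Q, Finset.mem_filter] at hq
  exact_mod_cast hq.2

lemma Tbad_sub : Tbad ⊆ T := by
  apply Finset.image_subset_image
  exact Finset.filter_subset _ _

lemma Tbad_mem_J (m : Fin 4 →₀ ℕ) (hm : m ∈ Tbad) : (monomial m (1:ℂ) : S) ∈ J := by
  rw [mem_J_iff]
  intro d hd
  rw [support_monomial] at hd
  simp at hd
  subst hd
  obtain ⟨q, hq, rfl⟩ := Finset.mem_image.mp hm
  simp only [Qbad, Finset.mem_filter] at hq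
  simp only [e0, e1, e2, e3, single_le4, toM_apply]
  simpa using hq.2

lemma li_sub (A : Finset (Fin 4 →₀ ℕ)) :
    LinearIndependent ℂ (fun d : A => (monomial d.1 (1:ℂ) : S)) := by
  have h := (basisMonomials (Fin 4) ℂ).linearIndependent.comp
    (Subtype.val : A → _) Subtype.val_injective
  have e : ((basisMonomials (Fin 4) ℂ) ∘ (Subtype.val : A → _))
      = fun d : A => (monomial d.1 (1:ℂ) : S) := by
    funext d; rw [Function.comp_apply, coe_basisMonomials]
  rwa [e] at h

lemma finrank_span_finset (A : Finset (Fin 4 →₀ ℕ)) :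
    Module.finrank ℂ (Submodule.span ℂ ((fun d => (monomial d (1:ℂ) : S)) '' ↑A)) = A.card := by
  have li := li_sub A
  have h := finrank_span_eq_card li
  rw [show (Set.range fun d : A => (monomial d.1 (1:ℂ) : S))
      = (fun d => (monomial d (1:ℂ) : S)) '' ↑A from by
    ext x
    constructor
    · rintro ⟨d, rfl⟩; exact ⟨d.1, d.2, rfl⟩
    · rintro ⟨d, hd, rfl⟩; exact ⟨⟨d, hd⟩, rfl⟩] at h
  rw [h, Fintype.card_coe]

lemma Sk10_span :
    Sk 10 = Submodule.span ℂ ((fun d => (monomial d (1:ℂ) : S)) '' ↑T) := by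
  apply le_antisymm
  · intro p hp
    nth_rewrite 1 [p.as_sum]
    apply Submodule.sum_mem
    intro m hm
    have hmT : m ∈ T := mem_T m (hp (mem_support_iff.mp hm))
    have : (monomial m (coeff m p) : S) = (coeff m p) • monomial m 1 := by
      rw [smul_monomial, smul_eq_mul, mul_one]
    rw [this]
    exact Submodule.smul_mem _ _ (Submodule.subset_span ⟨m, hmT, rfl⟩)
  · rw [Submodule.span_le]
    rintro _ ⟨d, hd, rfl⟩
    exact isWeightedHomogeneous_monomial _ _ _ (T_weight d hd)

lemma K_span : (LinearMap.ker Φ).map (Sk 10).subtype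
    = Submodule.span ℂ ((fun d => (monomial d (1:ℂ) : S)) '' ↑Tbad) := by
  apply le_antisymm
  · rintro _ ⟨p, hp, rfl⟩
    have hpJ : (p : S) ∈ J := (ker_iff p).mp (LinearMap.mem_ker.mp hp)
    rw [Submodule.subtype_apply, (p : S).as_sum]
    apply Submodule.sum_mem
    intro m hm
    have hmT : m ∈ Tbad :=
      mem_Tbad m (p.2 (mem_support_iff.mp hm)) ((mem_J_iff _).mp hpJ m hm)
    have : (monomial m (coeff m (p:S)) : S) = (coeff m (p:S)) • monomial m 1 := by
      rw [smul_monomial, smul_eq_mul, mul_one]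
    rw [this]
    exact Submodule.smul_mem _ _ (Submodule.subset_span ⟨m, hmT, rfl⟩)
  · rw [Submodule.span_le]
    rintro _ ⟨d, hd, rfl⟩
    have hS : (monomial d (1:ℂ) : S) ∈ Sk 10 :=
      isWeightedHomogeneous_monomial _ _ _ (T_weight d (Tbad_sub hd))
    exact ⟨⟨_, hS⟩, LinearMap.mem_ker.mpr ((ker_iff _).mpr (Tbad_mem_J d hd)), rfl⟩

lemma cardQ : Q.card = 49 := by decide
lemma cardQbad : Qbad.card = 21 := by decide

lemma finrank_Sk10 : Module.finrank ℂ (Sk 10) = 49 := by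
  rw [Sk10_span, finrank_span_finset, T, Finset.card_image_of_injective _ toM_inj, cardQ]

lemma fd_Sk10 : FiniteDimensional ℂ (Sk 10) := by
  rw [Sk10_span]
  exact FiniteDimensional.span_of_finite ℂ ((T.finite_toSet).image _)

lemma finrank_ker : Module.finrank ℂ (LinearMap.ker Φ) = 21 := by
  rw [← Submodule.finrank_map_subtype_eq (Sk 10) (LinearMap.ker Φ), K_span,
    finrank_span_finset, Tbad, Finset.card_image_of_injective _ toM_inj, cardQbad]

lemma finrank_range : Module.finrank ℂ (LinearMap.range Φ) = 28 := by
  have := fd_Sk10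
  have h := LinearMap.finrank_range_add_finrank_ker Φ
  rw [finrank_ker, finrank_Sk10] at h
  omega


/-- The differential of the period map of degree-10 hypersurfaces in `P(1,1,2,5)` at the
Fermat point has the maximum rank 28: `Φ(p)(ℓ) = mk(p·ℓ)`, the kernel of `Φ` is exactly
`J ∩ S₁₀`, and its range has dimension 28. -/
theorem differential_max_rank :
    (∀ (p : Sk 10) (ℓ : Sk 1),
        Φ p ℓ = Ideal.Quotient.mk J ((p : S) * (ℓ : S))) ∧
      (∀ p : Sk 10, Φ p = 0 ↔ (p : S) ∈ J) ∧
      Module.finrank ℂ (LinearMap.range Φ) = 28 :=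
  ⟨Phi_apply, ker_iff, finrank_range⟩
end
end
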